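/- Let A be an n×n complex matrix such that A^k is nonnegative and irreducible with (A^k)_{ii} > 0 for some index i and some k ≥ 1. Then A has a unique eigenvalue of maximum modulus, i.e. |λ₁(A)| > |λ₂(A)| where eigenvalues are ordered by decreasing modulus. -/

import Mathlib

open ComplexOrder

open Matrix Complex

noncomputable def specRad {n : ℕ} (A : Matrix (Fin n) (Fin n) ℂ) : ℝ :=
  sSup ((fun z : ℂ => ‖z‖) '' spectrum ℂ A)

def MatIrred {n : ℕ} (A : Matrix (Fin n) (Fin n) ℂ) : Prop :=
  ∀ S : Set (Fin n), S.Nonempty → S ≠ Set.univ → ∃ i ∈ S, ∃ j ∉ S, A i j ≠ 0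

section PerronAux

open Polynomial

variable {n : ℕ}

lemma specMatrix_iff_det (M : Matrix (Fin n) (Fin n) ℂ) (c : ℂ) :
    c ∈ spectrum ℂ M ↔ (c • (1 : Matrix (Fin n) (Fin n) ℂ) - M).det = 0 := by
  rw [spectrum.mem_iff, Algebra.algebraMap_eq_smul_one]
  rw [Matrix.isUnit_iff_isUnit_det, isUnit_iff_ne_zero, not_ne_iff]

lemma charpoly_eval_eq (M : Matrix (Fin n) (Fin n) ℂ) (c : ℂ) :
    M.charpoly.eval c = (c • (1 : Matrix (Fin n) (Fin n) ℂ) - M).det := by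
  rw [Matrix.charpoly, _root_.eval_det, matPolyEquiv_charmatrix]
  rw [eval_sub, eval_X, eval_C]
  congr 1
  rw [Matrix.scalar_apply, smul_one_eq_diagonal]

lemma specMatrix_iff_root (M : Matrix (Fin n) (Fin n) ℂ) (c : ℂ) :
    c ∈ spectrum ℂ M ↔ M.charpoly.IsRoot c := by
  rw [specMatrix_iff_det, IsRoot, charpoly_eval_eq]

lemma specMatrix_finite (M : Matrix (Fin n) (Fin n) ℂ) : (spectrum ℂ M).Finite := by
  have : spectrum ℂ M = {c | M.charpoly.IsRoot c} := Set.ext fun c => specMatrix_iff_root M c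
  rw [this]
  exact Polynomial.finite_setOf_isRoot M.charpoly_monic.ne_zero

lemma specMatrix_nonempty (hn : 0 < n) (M : Matrix (Fin n) (Fin n) ℂ) :
    (spectrum ℂ M).Nonempty := by
  have hd : M.charpoly.degree ≠ 0 := by
    rw [Matrix.charpoly_degree_eq_dim]
    simp [Fintype.card_fin]
    omega
  obtain ⟨c, hc⟩ := IsAlgClosed.exists_root M.charpoly hd
  exact ⟨c, (specMatrix_iff_root M c).2 hc⟩

lemma exists_eigvec {M : Matrix (Fin n) (Fin n) ℂ} {c : ℂ} (h : c ∈ spectrum ℂ M) :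
    ∃ v : Fin n → ℂ, v ≠ 0 ∧ M.mulVec v = c • v := by
  rw [specMatrix_iff_det] at h
  obtain ⟨v, hv0, hv⟩ := (Matrix.exists_mulVec_eq_zero_iff).2 h
  refine ⟨v, hv0, ?_⟩
  rwa [Matrix.sub_mulVec, Matrix.smul_mulVec, Matrix.one_mulVec, sub_eq_zero, eq_comm] at hv

lemma specRad_mem (hn : 0 < n) (M : Matrix (Fin n) (Fin n) ℂ) :
    ∃ c ∈ spectrum ℂ M, ‖c‖ = specRad M := by
  have hfin : ((fun z : ℂ => ‖z‖) '' spectrum ℂ M).Finite := (specMatrix_finite M).image _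
  have hne : ((fun z : ℂ => ‖z‖) '' spectrum ℂ M).Nonempty :=
    (specMatrix_nonempty hn M).image _
  have := Set.Nonempty.csSup_mem hne hfin
  obtain ⟨c, hc, hceq⟩ := this
  exact ⟨c, hc, hceq⟩

lemma abs_le_specRad {M : Matrix (Fin n) (Fin n) ℂ} {c : ℂ} (hc : c ∈ spectrum ℂ M) :
    ‖c‖ ≤ specRad M :=
  le_csSup ((specMatrix_finite M).image _).bddAbove (Set.mem_image_of_mem _ hc)

lemma specRad_nonneg (hn : 0 < n) (M : Matrix (Fin n) (Fin n) ℂ) : 0 ≤ specRad M := by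
  obtain ⟨c, hc, h⟩ := specRad_mem hn M
  rw [← h]; exact norm_nonneg _

lemma spec_pow (hn : 0 < n) (M : Matrix (Fin n) (Fin n) ℂ) {K : ℕ} (hK : 0 < K) :
    spectrum ℂ (M ^ K) = (· ^ K) '' spectrum ℂ M := by
  haveI : Nonempty (Fin n) := ⟨⟨0, hn⟩⟩
  exact spectrum.map_pow_of_pos M hK

lemma specRad_pow (hn : 0 < n) (M : Matrix (Fin n) (Fin n) ℂ) {K : ℕ} (hK : 0 < K) :
    specRad (M ^ K) = specRad M ^ K := by
  obtain ⟨c, hc, hceq⟩ := specRad_mem hn M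
  unfold specRad
  rw [spec_pow hn M hK]
  apply IsGreatest.csSup_eq
  constructor
  · exact ⟨c ^ K, Set.mem_image_of_mem _ hc, by show ‖c ^ K‖ = _; rw [norm_pow, hceq]; rfl⟩
  · rintro x ⟨y, ⟨d, hd, rfl⟩, rfl⟩
    show ‖d ^ K‖ ≤ _; rw [norm_pow]
    exact pow_le_pow_left₀ (norm_nonneg _) (abs_le_specRad hd) K

lemma mulVec_pow {M : Matrix (Fin n) (Fin n) ℂ} {c : ℂ} {v : Fin n → ℂ}
    (h : M.mulVec v = c • v) (t : ℕ) : (M ^ t).mulVec v = c ^ t • v := by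
  induction t with
  | zero => simp [Matrix.one_mulVec]
  | succ t ih =>
    rw [pow_succ, ← Matrix.mulVec_mulVec, h, Matrix.mulVec_smul, ih, pow_succ, smul_smul,
      mul_comm]

lemma pow_entry_nonneg {B : Matrix (Fin n) (Fin n) ℂ} (hB : ∀ i j, 0 ≤ B i j) :
    ∀ (t : ℕ) i j, 0 ≤ (B ^ t) i j := by
  intro t
  induction t with
  | zero => intro i j; rw [pow_zero]; by_cases h : i = j <;> simp [Matrix.one_apply, h]
  | succ t ih =>
    intro i j
    rw [pow_succ, Matrix.mul_apply]
    exact Finset.sum_nonneg fun l _ => mul_nonneg (ih i l) (hB l j)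

lemma pow_entry_prod_le {B : Matrix (Fin n) (Fin n) ℂ} (hB : ∀ i j, 0 ≤ B i j)
    (a b : ℕ) (i j l : Fin n) : (B ^ a) i l * (B ^ b) l j ≤ (B ^ (a + b)) i j := by
  rw [pow_add, Matrix.mul_apply]
  exact Finset.single_le_sum
    (f := fun l' => (B ^ a) i l' * (B ^ b) l' j)
    (fun l' _ => mul_nonneg (pow_entry_nonneg hB a i l') (pow_entry_nonneg hB b l' j))
    (Finset.mem_univ l)

lemma reach_fwd {B : Matrix (Fin n) (Fin n) ℂ} (hB : ∀ i j, 0 ≤ B i j)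
    (hirr : MatIrred B) (i j : Fin n) : ∃ t, 0 < (B ^ t) i j := by
  by_contra hcon
  push_neg at hcon
  set S : Set (Fin n) := {j' | ∃ t, 0 < (B ^ t) i j'} with hS
  have hiS : i ∈ S := ⟨0, by simp [Matrix.one_apply]⟩
  have hSne : S.Nonempty := ⟨i, hiS⟩
  have hSnu : S ≠ Set.univ := by
    intro h
    have : j ∈ S := h ▸ Set.mem_univ j
    obtain ⟨t, ht⟩ := this
    exact absurd ht (by simpa using hcon t)
  obtain ⟨a, haS, b, hbS, hab⟩ := hirr S hSne hSnu
  obtain ⟨t, ht⟩ := haS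
  apply hbS
  refine ⟨t + 1, lt_of_lt_of_le ?_ (pow_entry_prod_le hB t 1 i b a)⟩
  rw [pow_one]
  exact mul_pos ht (lt_of_le_of_ne (hB a b) (Ne.symm hab))

lemma reach_bwd {B : Matrix (Fin n) (Fin n) ℂ} (hB : ∀ i j, 0 ≤ B i j)
    (hirr : MatIrred B) (i j : Fin n) : ∃ t, 0 < (B ^ t) i j := by
  by_contra hcon
  push_neg at hcon
  set S : Set (Fin n) := {i' | ∃ t, 0 < (B ^ t) i' j} with hS
  have hjS : j ∈ S := ⟨0, by simp [Matrix.one_apply]⟩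
  have hSne : Sᶜ.Nonempty := by
    refine ⟨i, fun hmem => ?_⟩
    obtain ⟨t, ht⟩ := hmem
    exact absurd ht (by simpa using hcon t)
  have hSnu : Sᶜ ≠ Set.univ := by
    intro h
    have : j ∈ Sᶜ := h ▸ Set.mem_univ j
    exact this hjS
  obtain ⟨a, haS, b, hbS, hab⟩ := hirr Sᶜ hSne hSnu
  rw [Set.notMem_compl_iff] at hbS
  obtain ⟨t, ht⟩ := hbS
  apply haS
  refine ⟨1 + t, lt_of_lt_of_le ?_ (pow_entry_prod_le hB 1 t a j b)⟩
  rw [pow_one]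
  exact mul_pos (lt_of_le_of_ne (hB a b) (Ne.symm hab)) ht

lemma diag_pow_pos {B : Matrix (Fin n) (Fin n) ℂ} (hB : ∀ i j, 0 ≤ B i j)
    {i₀ : Fin n} (hd : 0 < B i₀ i₀) : ∀ t, 0 < (B ^ t) i₀ i₀ := by
  intro t
  induction t with
  | zero => simp [Matrix.one_apply]
  | succ t ih =>
    calc (0:ℂ) < (B ^ t) i₀ i₀ * (B ^ 1) i₀ i₀ := by rw [pow_one]; exact mul_pos ih hd
    _ ≤ (B ^ (t + 1)) i₀ i₀ := pow_entry_prod_le hB t 1 i₀ i₀ i₀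

lemma exists_primitive_pow {B : Matrix (Fin n) (Fin n) ℂ} (hB : ∀ i j, 0 ≤ B i j)
    (hirr : MatIrred B) {i₀ : Fin n} (hd : 0 < B i₀ i₀) :
    ∃ m, 1 ≤ m ∧ ∀ i j, 0 < (B ^ m) i j := by
  choose p hp using fun i => reach_fwd hB hirr i i₀
  choose q hq using fun j => reach_bwd hB hirr i₀ j
  set P := Finset.univ.sup p with hP
  set Q := Finset.univ.sup q with hQ
  refine ⟨P + Q + 1, by omega, fun i j => ?_⟩
  have hpi : p i ≤ P := Finset.le_sup (Finset.mem_univ i)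
  have hqj : q j ≤ Q := Finset.le_sup (Finset.mem_univ j)
  have harith : p i + (P + Q + 1 - p i - q j) + q j = P + Q + 1 := by omega
  calc (0:ℂ) < ((B ^ p i) i i₀ * (B ^ (P + Q + 1 - p i - q j)) i₀ i₀) * (B ^ q j) i₀ j := by
        exact mul_pos (mul_pos (hp i) (diag_pow_pos hB hd _)) (hq j)
    _ ≤ (B ^ (p i + (P + Q + 1 - p i - q j))) i i₀ * (B ^ q j) i₀ j := by
        apply mul_le_mul_of_nonneg_right (pow_entry_prod_le hB _ _ _ _ _)
        exact pow_entry_nonneg hB _ _ _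
    _ ≤ (B ^ (p i + (P + Q + 1 - p i - q j) + q j)) i j := pow_entry_prod_le hB _ _ _ _ _
    _ = (B ^ (P + Q + 1)) i j := by rw [harith]

lemma abs_trace_pow_le (hn : 0 < n) (M : Matrix (Fin n) (Fin n) ℂ) {t : ℕ} (ht : 0 < t) :
    ‖(M ^ t).trace‖ ≤ n * specRad M ^ t := by
  rw [Matrix.trace_eq_sum_roots_charpoly]
  have hroots : ∀ c ∈ (M ^ t).charpoly.roots, ‖c‖ ≤ specRad M ^ t := by
    intro c hc
    have hc' : c ∈ spectrum ℂ (M ^ t) := by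
      rw [specMatrix_iff_root]
      exact (Polynomial.mem_roots'.1 hc).2
    rw [spec_pow hn M ht] at hc'
    obtain ⟨d, hd, rfl⟩ := hc'
    rw [norm_pow]
    exact pow_le_pow_left₀ (norm_nonneg _) (abs_le_specRad hd) t
  calc ‖(M ^ t).charpoly.roots.sum‖
        ≤ ((M ^ t).charpoly.roots.map (fun z : ℂ => ‖z‖)).sum := by
          exact norm_multiset_sum_le ((M ^ t).charpoly.roots)
    _ ≤ (Multiset.card ((M ^ t).charpoly.roots.map (fun z : ℂ => ‖z‖))) • (specRad M ^ t) := by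
        apply Multiset.sum_le_card_nsmul
        intro x hx
        obtain ⟨c, hc, rfl⟩ := Multiset.mem_map.1 hx
        exact hroots c hc
    _ ≤ n * specRad M ^ t := by
        rw [Multiset.card_map, nsmul_eq_mul]
        have hcard : (Multiset.card ((M ^ t).charpoly.roots)) ≤ n := by
          simpa using (M ^ t).charpoly.card_roots' |>.trans
            (le_of_eq (by simp [Matrix.charpoly_natDegree_eq_dim]))
        have hpow : (0:ℝ) ≤ specRad M ^ t := pow_nonneg (specRad_nonneg hn M) t
        exact mul_le_mul_of_nonneg_right (by exact_mod_cast hcard) hpow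

lemma rpow_entry_nonneg {R : Matrix (Fin n) (Fin n) ℝ} (hR : ∀ i j, 0 ≤ R i j) :
    ∀ (t : ℕ) i j, 0 ≤ (R ^ t) i j := by
  intro t
  induction t with
  | zero => intro i j; rw [pow_zero]; by_cases h : i = j <;> simp [Matrix.one_apply, h]
  | succ t ih =>
    intro i j
    rw [pow_succ, Matrix.mul_apply]
    exact Finset.sum_nonneg fun l _ => mul_nonneg (ih i l) (hR l j)

lemma growth_le_specRad (hn : 0 < n) (M : Matrix (Fin n) (Fin n) ℂ)
    (R : Matrix (Fin n) (Fin n) ℝ) (hMR : ∀ i j, M i j = (R i j : ℂ))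
    (hRpos : ∀ i j, 0 < R i j) {y : Fin n → ℝ} (hy : ∀ i, 0 < y i) {s : ℝ}
    (hsy : ∀ i, s * y i ≤ R.mulVec y i) : s ≤ specRad M := by
  set r := specRad M with hr
  by_contra hcon
  push_neg at hcon
  have hr0 : 0 ≤ r := specRad_nonneg hn M
  have hs0 : 0 < s := lt_of_le_of_lt hr0 hcon
  haveI : Nonempty (Fin n) := ⟨⟨0, hn⟩⟩
  -- iterate
  have hRnn : ∀ i j, 0 ≤ R i j := fun i j => (hRpos i j).le
  have hind : ∀ t i, s ^ t * y i ≤ (R ^ t).mulVec y i := by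
    intro t
    induction t with
    | zero => intro i; simp [Matrix.one_mulVec]
    | succ t ih =>
      intro i
      have h1 : (R ^ (t+1)).mulVec y = R.mulVec ((R ^ t).mulVec y) := by
        rw [pow_succ', Matrix.mulVec_mulVec]
      rw [h1]
      have h2 : s ^ t * R.mulVec y i ≤ R.mulVec ((R ^ t).mulVec y) i := by
        unfold Matrix.mulVec dotProduct
        simp only [Finset.mul_sum]
        apply Finset.sum_le_sum
        intro j _
        rw [mul_left_comm, ← Finset.mul_sum]
        exact mul_le_mul_of_nonneg_left (ih j) (hRnn i j)
      calc s ^ (t+1) * y i = s ^ t * (s * y i) := by ring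
        _ ≤ s ^ t * R.mulVec y i :=
            mul_le_mul_of_nonneg_left (hsy i) (pow_nonneg hs0.le t)
        _ ≤ _ := h2
  -- constants
  set i₀ : Fin n := ⟨0, hn⟩
  obtain ⟨ma, -, hma⟩ := Finset.exists_min_image Finset.univ
    (fun p : Fin n × Fin n => R p.1 p.2) (by simp [Finset.univ_nonempty])
  set mmin := R ma.1 ma.2 with hmmin
  have hm0 : 0 < mmin := hRpos ma.1 ma.2
  obtain ⟨jmax, -, hjmax⟩ := Finset.exists_max_image Finset.univ y (by simp [Finset.univ_nonempty])
  set Y := y jmax with hY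
  have hY0 : 0 < Y := hy jmax
  -- row sum bound
  have hrow : ∀ t, s ^ t * y i₀ ≤ (∑ b, (R ^ t) i₀ b) * Y := by
    intro t
    calc s ^ t * y i₀ ≤ (R ^ t).mulVec y i₀ := hind t i₀
      _ = ∑ b, (R ^ t) i₀ b * y b := rfl
      _ ≤ ∑ b, (R ^ t) i₀ b * Y := by
          apply Finset.sum_le_sum
          intro b _
          exact mul_le_mul_of_nonneg_left (hjmax b (Finset.mem_univ b))
            (rpow_entry_nonneg hRnn t i₀ b)
      _ = (∑ b, (R ^ t) i₀ b) * Y := by rw [Finset.sum_mul]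
  -- diagonal bound
  have hdiagb : ∀ t, mmin * mmin * (∑ b, (R ^ t) i₀ b) ≤ (R ^ (t + 2)) i₀ i₀ := by
    intro t
    have he : R ^ (t + 2) = R * (R ^ t * R) := by
      rw [← pow_succ, ← pow_succ']
    have h1 : mmin * (∑ b, (R ^ t) i₀ b) ≤ (R ^ t * R) i₀ i₀ := by
      rw [Matrix.mul_apply, Finset.mul_sum]
      apply Finset.sum_le_sum
      intro b _
      rw [mul_comm mmin]
      exact mul_le_mul_of_nonneg_left (hma (b, i₀) (Finset.mem_univ _))
        (rpow_entry_nonneg hRnn t i₀ b)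
    have h2 : R i₀ i₀ * (R ^ t * R) i₀ i₀ ≤ (R ^ (t + 2)) i₀ i₀ := by
      rw [he, Matrix.mul_apply]
      apply Finset.single_le_sum (f := fun a => R i₀ a * (R ^ t * R) a i₀)
        (fun a _ => mul_nonneg (hRnn i₀ a) (by
          have : R ^ t * R = R ^ (t+1) := by rw [← pow_succ]
          rw [this]; exact rpow_entry_nonneg hRnn (t+1) a i₀)) (Finset.mem_univ i₀)
    calc mmin * mmin * (∑ b, (R ^ t) i₀ b) = mmin * (mmin * ∑ b, (R ^ t) i₀ b) := by ring
      _ ≤ mmin * ((R ^ t * R) i₀ i₀) := by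
          apply mul_le_mul_of_nonneg_left _ hm0.le
          calc mmin * ∑ b, (R ^ t) i₀ b ≤ mmin * (mmin⁻¹ * (mmin * ∑ b, (R ^ t) i₀ b)) := by
                rw [← mul_assoc, mul_inv_cancel₀ hm0.ne', one_mul]
            _ = mmin * ∑ b, (R ^ t) i₀ b := by
                rw [← mul_assoc, mul_inv_cancel₀ hm0.ne', one_mul]
            _ ≤ (R ^ t * R) i₀ i₀ := h1
      _ ≤ R i₀ i₀ * (R ^ t * R) i₀ i₀ := by
          apply mul_le_mul_of_nonneg_right (hma (i₀, i₀) (Finset.mem_univ _))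
          calc (0:ℝ) ≤ mmin * (∑ b, (R ^ t) i₀ b) :=
                mul_nonneg hm0.le (Finset.sum_nonneg fun b _ => rpow_entry_nonneg hRnn t i₀ b)
            _ ≤ _ := h1
      _ ≤ _ := h2
  -- trace bound via complex
  have hMmap : M = R.map (Complex.ofRealHom : ℝ →+* ℂ) := by
    ext i j; exact hMR i j
  have htrace : ∀ u : ℕ, (M ^ u).trace = ((R ^ u).trace : ℂ) := by
    intro u
    have : M ^ u = (R ^ u).map (Complex.ofRealHom : ℝ →+* ℂ) := by
      rw [hMmap]
      have := map_pow (Complex.ofRealHom.mapMatrix : Matrix (Fin n) (Fin n) ℝ →+* Matrix (Fin n) (Fin n) ℂ) R u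
      simpa [RingHom.mapMatrix_apply] using this.symm
    rw [this, Matrix.trace, Matrix.trace]
    push_cast
    simp [Matrix.diag, Matrix.map_apply]
  have hkey : ∀ t : ℕ, mmin * mmin * (s ^ t * y i₀) ≤ (n * r ^ (t + 2)) * Y := by
    intro t
    have h3 : (R ^ (t + 2)) i₀ i₀ ≤ (R ^ (t + 2)).trace := by
      rw [Matrix.trace]
      exact Finset.single_le_sum (f := fun a => (R ^ (t+2)) a a)
        (fun a _ => rpow_entry_nonneg hRnn (t+2) a a) (Finset.mem_univ i₀)
    have h4 : (R ^ (t + 2)).trace ≤ n * r ^ (t + 2) := by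
      have h5 := abs_trace_pow_le hn M (t := t + 2) (by omega)
      rw [htrace (t+2)] at h5
      calc (R ^ (t + 2)).trace ≤ |(R ^ (t + 2)).trace| := le_abs_self _
        _ = ‖((R ^ (t + 2)).trace : ℂ)‖ := by rw [Complex.norm_real, Real.norm_eq_abs]
        _ ≤ n * r ^ (t + 2) := h5
    calc mmin * mmin * (s ^ t * y i₀)
        ≤ mmin * mmin * ((∑ b, (R ^ t) i₀ b) * Y) := by
          apply mul_le_mul_of_nonneg_left (hrow t) (mul_nonneg hm0.le hm0.le)
      _ = (mmin * mmin * (∑ b, (R ^ t) i₀ b)) * Y := by ring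
      _ ≤ (R ^ (t + 2)) i₀ i₀ * Y := mul_le_mul_of_nonneg_right (hdiagb t) hY0.le
      _ ≤ (n * r ^ (t + 2)) * Y := mul_le_mul_of_nonneg_right (h3.trans h4) hY0.le
  -- derive contradiction
  set E := mmin * mmin * y i₀ with hE
  have hE0 : 0 < E := mul_pos (mul_pos hm0 hm0) (hy i₀)
  rcases eq_or_lt_of_le hr0 with hr00 | hrpos
  · have hk1 := hkey 1
    rw [← hr00] at hk1
    have hrhs : (↑n * (0:ℝ) ^ (1 + 2)) * Y = 0 := by norm_num
    rw [hrhs] at hk1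
    have hlhs : 0 < mmin * mmin * (s ^ 1 * y i₀) :=
      mul_pos (mul_pos hm0 hm0) (mul_pos (by simpa using hs0) (hy i₀))
    linarith
  · have hq : 1 < s / r := (one_lt_div hrpos).2 hcon
    obtain ⟨t, ht⟩ := pow_unbounded_of_one_lt ((n * r ^ 2 * Y) / E) hq
    have hk := hkey t
    have h7 : E * (s / r) ^ t ≤ n * r ^ 2 * Y := by
      rw [div_pow, ← mul_div_assoc, div_le_iff₀ (pow_pos hrpos t)]
      calc E * s ^ t = mmin * mmin * (s ^ t * y i₀) := by ring
        _ ≤ (n * r ^ (t + 2)) * Y := hk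
        _ = n * r ^ 2 * Y * r ^ t := by ring
    have h6 : n * r ^ 2 * Y < E * (s / r) ^ t := by
      rw [div_lt_iff₀ hE0] at ht
      linarith [ht]
    linarith

lemma re_eq_abs_imp {w : ℂ} (h : w.re = ‖w‖) : w = (‖w‖ : ℂ) := by
  have h1 : (‖w‖) ^ 2 = w.re ^ 2 + w.im ^ 2 := by
    rw [Complex.sq_norm, Complex.normSq_apply]; ring
  have h2 : w.im = 0 := by
    rw [h] at h1
    have h3 : w.im ^ 2 = 0 := by linarith
    exact (pow_eq_zero_iff two_ne_zero).1 h3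
  apply Complex.ext <;> simp [← h, h2]

lemma perron_align (hn : 0 < n) (M : Matrix (Fin n) (Fin n) ℂ)
    (R : Matrix (Fin n) (Fin n) ℝ) (hMR : ∀ i j, M i j = (R i j : ℂ))
    (hRpos : ∀ i j, 0 < R i j) {c : ℂ} {v : Fin n → ℂ} (hv : v ≠ 0)
    (hev : M.mulVec v = c • v) (hc : ‖c‖ = specRad M) :
    ∃ ζ : ℂ, ζ ≠ 0 ∧ ∃ u : Fin n → ℝ, (∀ i, 0 < u i) ∧ (∀ i, v i = ζ * u i) ∧
      R.mulVec u = specRad M • u ∧ c = specRad M := by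
  set r := specRad M with hrdef
  obtain ⟨j₁, hj₁⟩ := Function.ne_iff.1 hv
  set u₀ : Fin n → ℝ := fun i => ‖v i‖ with hu₀
  have hu₀nn : ∀ i, 0 ≤ u₀ i := fun i => norm_nonneg _
  have hu₀j₁ : 0 < u₀ j₁ := by simpa [hu₀] using hj₁
  have hRnn : ∀ i j, 0 ≤ R i j := fun i j => (hRpos i j).le
  -- subinvariance
  have hmv : ∀ i, (M.mulVec v) i = ∑ j, (R i j : ℂ) * v j := by
    intro i
    rw [Matrix.mulVec, dotProduct]
    exact Finset.sum_congr rfl fun j _ => by rw [hMR]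
  have hsub : ∀ i, r * u₀ i ≤ R.mulVec u₀ i := by
    intro i
    have h1 : ‖(M.mulVec v) i‖ = r * u₀ i := by
      rw [hev]
      show ‖c * v i‖ = r * u₀ i
      rw [norm_mul, hc, hu₀]
    have h2 : ‖(M.mulVec v) i‖ ≤ R.mulVec u₀ i := by
      rw [hmv]
      refine le_trans (norm_sum_le _ _) ?_
      apply le_of_eq
      refine Finset.sum_congr rfl fun j _ => ?_
      rw [norm_mul, Complex.norm_real, Real.norm_eq_abs, _root_.abs_of_nonneg (hRnn i j), hu₀]
    rw [← h1]; exact h2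
  -- positivity of R.mulVec u₀
  have hy : ∀ i, 0 < R.mulVec u₀ i := by
    intro i
    have h3 : R i j₁ * u₀ j₁ ≤ R.mulVec u₀ i :=
      Finset.single_le_sum (f := fun j => R i j * u₀ j)
        (fun j _ => mul_nonneg (hRnn i j) (hu₀nn j)) (Finset.mem_univ j₁)
    exact lt_of_lt_of_le (mul_pos (hRpos i j₁) hu₀j₁) h3
  -- equality
  have heq : R.mulVec u₀ = r • u₀ := by
    by_contra hne
    set z : Fin n → ℝ := fun i => R.mulVec u₀ i - r * u₀ i with hz
    have hznn : ∀ i, 0 ≤ z i := fun i => sub_nonneg.2 (hsub i)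
    have hzj : ∃ j, 0 < z j := by
      by_contra hno
      push_neg at hno
      apply hne
      funext i
      have : z i = 0 := le_antisymm (hno i) (hznn i)
      have := sub_eq_zero.1 this
      simp [Pi.smul_apply, smul_eq_mul]
      linarith [this]
    obtain ⟨j₂, hj₂⟩ := hzj
    have hRz : ∀ i, 0 < R.mulVec z i := by
      intro i
      have h3 : R i j₂ * z j₂ ≤ R.mulVec z i :=
        Finset.single_le_sum (f := fun j => R i j * z j)
          (fun j _ => mul_nonneg (hRnn i j) (hznn j)) (Finset.mem_univ j₂)
      exact lt_of_lt_of_le (mul_pos (hRpos i j₂) hj₂) h3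
    -- z = R.mulVec u₀ - r • u₀, so R.mulVec z = R.mulVec y - r • y with y = R.mulVec u₀
    have hzdef : z = R.mulVec u₀ - r • u₀ := by funext i; simp [hz]
    have hlin : R.mulVec z = R.mulVec (R.mulVec u₀) - r • (R.mulVec u₀) := by
      rw [hzdef, Matrix.mulVec_sub, Matrix.mulVec_smul]
    haveI : Nonempty (Fin n) := ⟨⟨0, hn⟩⟩
    obtain ⟨i₂, -, hi₂⟩ := Finset.exists_min_image Finset.univ
      (fun i => R.mulVec z i / R.mulVec u₀ i) (by simp [Finset.univ_nonempty])
    set ε := R.mulVec z i₂ / R.mulVec u₀ i₂ with hε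
    have hε0 : 0 < ε := div_pos (hRz i₂) (hy i₂)
    have hs : ∀ i, (r + ε) * R.mulVec u₀ i ≤ R.mulVec (R.mulVec u₀) i := by
      intro i
      have h4 : ε ≤ R.mulVec z i / R.mulVec u₀ i := hi₂ i (Finset.mem_univ i)
      have h5 : ε * R.mulVec u₀ i ≤ R.mulVec z i := by
        rw [← div_mul_cancel₀ (R.mulVec z i) (hy i).ne']
        exact mul_le_mul_of_nonneg_right h4 (hy i).le
      have h6 := congrFun hlin i
      simp only [Pi.sub_apply, Pi.smul_apply, smul_eq_mul] at h6
      linarith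
    have := growth_le_specRad hn M R hMR hRpos hy hs
    rw [← hrdef] at this
    linarith
  -- positivity of u₀ and r
  have hu₀pos : ∀ i, 0 < u₀ i := by
    intro i
    rcases (hu₀nn i).lt_or_eq with h | h
    · exact h
    · exfalso
      have := congrFun heq i
      simp only [Pi.smul_apply, smul_eq_mul, ← h] at this
      have h7 := hy i
      rw [this] at h7
      simp [← h] at h7
  have hrpos : 0 < r := by
    have := congrFun heq j₁
    simp only [Pi.smul_apply, smul_eq_mul] at this
    have h7 := hy j₁
    rw [this] at h7
    rcases mul_pos_iff.1 h7 with ⟨h, -⟩ | ⟨-, h⟩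
    · exact h
    · exact absurd h (not_lt.2 hu₀j₁.le)
  -- alignment
  set i₀ : Fin n := ⟨0, hn⟩
  set S : ℂ := c * v i₀ with hS
  have hSabs : ‖S‖ = r * u₀ i₀ := by
    rw [hS, norm_mul, hc, hu₀]
  have hSne : S ≠ 0 := by
    intro h
    rw [h] at hSabs
    simp at hSabs
    rcases hSabs with h | h
    · exact hrpos.ne' h
    · exact (hu₀pos i₀).ne' h
  set ζ : ℂ := S / (‖S‖ : ℂ) with hζ
  have habsS0 : (‖S‖ : ℂ) ≠ 0 := by
    simp [norm_ne_zero_iff.2 hSne]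
  have hζabs : ‖ζ‖ = 1 := by
    rw [hζ, norm_div, Complex.norm_real, Real.norm_eq_abs, _root_.abs_of_nonneg (norm_nonneg _)]
    exact div_self (norm_ne_zero_iff.2 hSne)
  have hζne : ζ ≠ 0 := by
    intro h; rw [h] at hζabs; simp at hζabs
  -- sum of w_j
  have hsum : ∑ j, (starRingEnd ℂ) ζ * ((R i₀ j : ℂ) * v j) = (‖S‖ : ℂ) := by
    rw [← Finset.mul_sum, ← hmv i₀, hev]
    simp only [Pi.smul_apply, smul_eq_mul, ← hS]
    rw [hζ, map_div₀]
    rw [Complex.conj_ofReal]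
    field_simp
    rw [mul_comm, Complex.mul_conj]
    rw [Complex.normSq_eq_norm_sq]
    push_cast
    ring
  have habseq : ∀ j, ‖(starRingEnd ℂ) ζ * ((R i₀ j : ℂ) * v j)‖ = R i₀ j * u₀ j := by
    intro j
    rw [norm_mul, norm_mul, Complex.norm_conj, hζabs, Complex.norm_real, Real.norm_eq_abs,
      _root_.abs_of_nonneg (hRnn i₀ j), one_mul, hu₀]
  have hresum : ∑ j, (R i₀ j * u₀ j - ((starRingEnd ℂ) ζ * ((R i₀ j : ℂ) * v j)).re) = 0 := by
    rw [Finset.sum_sub_distrib]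
    have h8 : ∑ j, ((starRingEnd ℂ) ζ * ((R i₀ j : ℂ) * v j)).re = ‖S‖ := by
      rw [← Complex.re_sum, hsum, Complex.ofReal_re]
    rw [h8, hSabs]
    have h9 : ∑ j, R i₀ j * u₀ j = R.mulVec u₀ i₀ := rfl
    rw [h9, congrFun heq i₀]
    exact sub_eq_zero.2 rfl
  have halign : ∀ j, ((starRingEnd ℂ) ζ * ((R i₀ j : ℂ) * v j)) = ((R i₀ j * u₀ j : ℝ) : ℂ) := by
    intro j
    have h10 : ∀ j' ∈ Finset.univ, 0 ≤ R i₀ j' * u₀ j' - ((starRingEnd ℂ) ζ * ((R i₀ j' : ℂ) * v j')).re := by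
      intro j' _
      rw [sub_nonneg, ← habseq j']
      exact Complex.re_le_norm _
    have h11 := (Finset.sum_eq_zero_iff_of_nonneg h10).1 hresum j (Finset.mem_univ j)
    have h12 : ((starRingEnd ℂ) ζ * ((R i₀ j : ℂ) * v j)).re
        = ‖(starRingEnd ℂ) ζ * ((R i₀ j : ℂ) * v j)‖ := by
      rw [habseq j]; linarith
    have h13 := re_eq_abs_imp h12
    rw [h13, habseq j]
  have hvj : ∀ j, v j = ζ * (u₀ j : ℂ) := by
    intro j
    have h14 := halign j
    have hζζ : ζ * (starRingEnd ℂ) ζ = 1 := by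
      rw [Complex.mul_conj, Complex.normSq_eq_norm_sq, hζabs]
      norm_num
    have h15 : ζ * ((starRingEnd ℂ) ζ * ((R i₀ j : ℂ) * v j)) = ζ * ((R i₀ j * u₀ j : ℝ) : ℂ) := by
      rw [h14]
    rw [← mul_assoc, hζζ, one_mul] at h15
    have hR0 : (R i₀ j : ℂ) ≠ 0 := by
      simp [(hRpos i₀ j).ne']
    push_cast at h15
    have h15' : (R i₀ j : ℂ) * v j = (R i₀ j : ℂ) * (ζ * ((u₀ j : ℝ) : ℂ)) := by
      linear_combination h15
    exact mul_left_cancel₀ hR0 h15'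
  -- c = r
  have hcr : c = (r : ℂ) := by
    have h16 := congrFun hev j₁
    rw [hmv j₁] at h16
    simp only [Pi.smul_apply, smul_eq_mul] at h16
    have h17 : ∑ j, (R j₁ j : ℂ) * v j = ζ * ((R.mulVec u₀ j₁ : ℝ) : ℂ) := by
      rw [Matrix.mulVec, dotProduct]
      push_cast
      rw [Finset.mul_sum]
      refine Finset.sum_congr rfl fun j _ => ?_
      rw [hvj j]; ring
    rw [h17, congrFun heq j₁] at h16
    simp only [Pi.smul_apply, smul_eq_mul] at h16
    rw [hvj j₁] at h16
    push_cast at h16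
    have hu0 : ((u₀ j₁ : ℝ) : ℂ) ≠ 0 := by
      simpa using (hu₀pos j₁).ne'
    have h19 : (c - (r : ℂ)) * (ζ * ((u₀ j₁ : ℝ) : ℂ)) = 0 := by
      linear_combination -h16
    rcases mul_eq_zero.1 h19 with h20 | h20
    · exact sub_eq_zero.1 h20
    · rcases mul_eq_zero.1 h20 with h21 | h21
      · exact absurd h21 hζne
      · exact absurd h21 hu0
  exact ⟨ζ, hζne, u₀, hu₀pos, hvj, heq, hcr⟩

lemma perron_unique (hn : 0 < n) (R : Matrix (Fin n) (Fin n) ℝ)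
    (hRpos : ∀ i j, 0 < R i j) {r : ℝ} {u w : Fin n → ℝ}
    (hu : ∀ i, 0 < u i) (hw : ∀ i, 0 < w i)
    (hru : R.mulVec u = r • u) (hrw : R.mulVec w = r • w) :
    ∃ t : ℝ, 0 < t ∧ w = t • u := by
  haveI : Nonempty (Fin n) := ⟨⟨0, hn⟩⟩
  obtain ⟨i₀, -, hi₀⟩ := Finset.exists_min_image Finset.univ
    (fun i => w i / u i) (by simp [Finset.univ_nonempty])
  set t := w i₀ / u i₀ with ht
  have ht0 : 0 < t := div_pos (hw i₀) (hu i₀)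
  refine ⟨t, ht0, ?_⟩
  set z : Fin n → ℝ := fun i => w i - t * u i with hz
  have hznn : ∀ i, 0 ≤ z i := by
    intro i
    have h1 : t ≤ w i / u i := hi₀ i (Finset.mem_univ i)
    have h2 : t * u i ≤ w i := by
      rw [← div_mul_cancel₀ (w i) (hu i).ne']
      exact mul_le_mul_of_nonneg_right h1 (hu i).le
    simpa [hz] using sub_nonneg.2 h2
  have hzi₀ : z i₀ = 0 := by
    simp only [hz, ht]
    field_simp [(hu i₀).ne']
    ring
  have hzeig : R.mulVec z = r • z := by
    have : z = w - t • u := by funext i; simp [hz]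
    rw [this, Matrix.mulVec_sub, Matrix.mulVec_smul, hru, hrw]
    funext i
    simp [smul_smul, mul_comm]
    ring
  have hzzero : ∀ i, z i = 0 := by
    intro i
    by_contra hne
    have hzi : 0 < z i := lt_of_le_of_ne (hznn i) (Ne.symm hne)
    have h3 : R i₀ i * z i ≤ R.mulVec z i₀ :=
      Finset.single_le_sum (f := fun j => R i₀ j * z j)
        (fun j _ => mul_nonneg (hRpos i₀ j).le (hznn j)) (Finset.mem_univ i)
    have h4 : 0 < R.mulVec z i₀ := lt_of_lt_of_le (mul_pos (hRpos i₀ i) hzi) h3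
    rw [hzeig] at h4
    simp [hzi₀] at h4
  funext i
  have := hzzero i
  simp only [hz] at this
  have : w i = t * u i := by linarith
  simpa using this

end PerronAux

theorem stmt_4 {n : ℕ} (hn : 0 < n) (A : Matrix (Fin n) (Fin n) ℂ) (k : ℕ) (hk : 1 ≤ k)
    (hnonneg : ∀ i j, 0 ≤ (A ^ k) i j) (hirr : MatIrred (A ^ k))
    (hdiag : ∃ i, 0 < (A ^ k) i i) :
    ∃ lam ∈ spectrum ℂ A, ‖lam‖ = specRad A ∧
      ∀ mu ∈ spectrum ℂ A, mu ≠ lam → ‖mu‖ < ‖lam‖ := by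
  obtain ⟨i₀, hi₀⟩ := hdiag
  obtain ⟨m, hm1, hMpos'⟩ := exists_primitive_pow hnonneg hirr hi₀
  set K := k * m with hKdef
  have hK : 0 < K := Nat.mul_pos (by omega) (by omega)
  set M := A ^ K with hM
  have hMeq : M = (A ^ k) ^ m := by rw [hM, pow_mul]
  have hMpos : ∀ i j, 0 < M i j := by rw [hMeq]; exact hMpos'
  set R : Matrix (Fin n) (Fin n) ℝ := Matrix.of (fun i j => (M i j).re) with hR
  have hRpos : ∀ i j, 0 < R i j := by
    intro i j
    have := (Complex.lt_def.1 (hMpos i j)).1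
    simpa [hR] using this
  have hMR : ∀ i j, M i j = (R i j : ℂ) := by
    intro i j
    have him : (M i j).im = 0 := ((Complex.lt_def.1 (hMpos i j)).2).symm.trans rfl |>.symm ▸ rfl
    have him' : (M i j).im = 0 := by
      have := (Complex.lt_def.1 (hMpos i j)).2
      simpa using this.symm
    apply Complex.ext
    · simp [hR]
    · simp [hR, him']
  obtain ⟨lam, hlam, hlabs⟩ := specRad_mem hn A
  refine ⟨lam, hlam, hlabs, ?_⟩
  intro mu hmu hne
  by_contra hge
  push_neg at hge
  have hmueq : ‖mu‖ = specRad A :=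
    le_antisymm (abs_le_specRad hmu) (hlabs ▸ hge)
  obtain ⟨v, hv0, hveig⟩ := exists_eigvec hlam
  obtain ⟨w, hw0, hweig⟩ := exists_eigvec hmu
  have hvM : M.mulVec v = lam ^ K • v := mulVec_pow hveig K
  have hwM : M.mulVec w = mu ^ K • w := mulVec_pow hweig K
  have hrM : specRad M = specRad A ^ K := specRad_pow hn A hK
  have habs1 : ‖lam ^ K‖ = specRad M := by
    rw [norm_pow, hlabs, hrM]
  have habs2 : ‖mu ^ K‖ = specRad M := by
    rw [norm_pow, hmueq, hrM]
  obtain ⟨ζv, hζv, uv, huv, hvu, huveig, -⟩ :=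
    perron_align hn M R hMR hRpos hv0 hvM habs1
  obtain ⟨ζw, hζw, uw, huw, hwu, huweig, -⟩ :=
    perron_align hn M R hMR hRpos hw0 hwM habs2
  obtain ⟨t, ht0, htw⟩ := perron_unique hn R hRpos huv huw huveig huweig
  have hwv : ∀ j, w j = (ζw * (t : ℂ) / ζv) * v j := by
    intro j
    have h1 : uw j = t * uv j := by
      have := congrFun htw j
      simpa using this
    rw [hwu j, h1, hvu j]
    push_cast
    field_simp
  have hwfun : w = (ζw * (t : ℂ) / ζv) • v := by
    funext j
    rw [hwv j]
    simp
  have hAw : A.mulVec w = lam • w := by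
    rw [hwfun, Matrix.mulVec_smul, hveig, smul_comm]
  have hmuw : mu • w = lam • w := by rw [← hweig, hAw]
  obtain ⟨j, hj⟩ := Function.ne_iff.1 hw0
  have hj' : w j ≠ 0 := by simpa using hj
  have := congrFun hmuw j
  simp only [Pi.smul_apply, smul_eq_mul] at this
  exact hne (mul_right_cancel₀ hj' this)
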